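/- Let (X,ν) be a probability space and let {T_n} be a sequence of operators in the class B+ such that lim_{n→∞} λ(T_n)/(a n^b c^n) = 1 for some a > 0, b a nonnegative integer, c ≥ 1. Set T̂_n = T_n/(a(n+1)^b c^n). Then the difference of Cesàro averages (1/N) Σ_{n=0}^{N−1} P(T_n) − (1/N) Σ_{n=0}^{N−1} T̂_n tends to zero in operator norm on L^p(X,ν) for every p ∈ [1,∞]; consequently, for any φ ∈ L^p(X,ν) the sequences (1/N) Σ_{n=0}^{N−1} P(T_n)(φ) and (1/N) Σ_{n=0}^{N−1} T̂_n(φ) converge (in L^p, or ν-almost everywhere) simultaneously and have the same limit. -/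

import Mathlib

open MeasureTheory Filter ENNReal

namespace Paper

variable {X : Type*} [MeasurableSpace X] (ν : MeasureTheory.Measure X)

/-- The constant function `1` as an element of `L¹(X,ν)`. -/
noncomputable def oneL [IsFiniteMeasure ν] : Lp ℝ 1 ν :=
  (memLp_const (1 : ℝ)).toLp (fun _ => (1 : ℝ))

/-- The class `B⁺` of operators on `L¹(X,ν)`: `A` maps the constant function `1`
to `lam • 1`, is positivity-preserving, maps each `L^p` into itself and satisfies
`‖A f‖_p ≤ lam * ‖f‖_p` for all `p ∈ [1,∞]`. -/
def InBPlus [IsFiniteMeasure ν] (A : Lp ℝ 1 ν →ₗ[ℝ] Lp ℝ 1 ν) (lam : ℝ) : Prop :=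
  A (oneL ν) = lam • oneL ν ∧
  (∀ f : Lp ℝ 1 ν, 0 ≤ f → 0 ≤ A f) ∧
  (∀ (p : ℝ≥0∞), 1 ≤ p → ∀ f : Lp ℝ 1 ν, MemLp (⇑f) p ν →
    MemLp (⇑(A f)) p ν ∧
    eLpNorm (⇑(A f)) p ν ≤ ENNReal.ofReal lam * eLpNorm (⇑f) p ν)

/-- Cesàro averages `(1/N) ∑_{n<N} T n` of a sequence of operators. -/
noncomputable def cesaro (T : ℕ → (Lp ℝ 1 ν →ₗ[ℝ] Lp ℝ 1 ν)) (N : ℕ) :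
    Lp ℝ 1 ν →ₗ[ℝ] Lp ℝ 1 ν :=
  (N : ℝ)⁻¹ • ∑ n ∈ Finset.range N, T n

/-- A sequence of nonnegative reals is regular if, along each arithmetic progression
modulo some `q ≥ 1`, it is either eventually zero or asymptotic to `a k^b c^k`
with `a > 0`, `b ∈ ℕ`, `c ≥ 1`. -/
def IsRegular (x : ℕ → ℝ) : Prop :=
  ∃ q : ℕ, 0 < q ∧ ∀ r : ℕ, r < q →
    (∀ᶠ k in atTop, x (q * k + r) = 0) ∨
    (∃ a : ℝ, 0 < a ∧ ∃ b : ℕ, ∃ c : ℝ, 1 ≤ c ∧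
      Tendsto (fun k : ℕ => x (q * k + r) / (a * (k : ℝ) ^ b * c ^ k)) atTop (nhds 1))

/-- A sequence `T n` of operators of class `B⁺` with `λ(T n) = lam n` is pre-convergent if
`lam` is regular, and the Cesàro averages of the normalized operators `P(T n) = T n / lam n`
applied to `φ` converge in `L^p` for `φ ∈ L^p` (`1 ≤ p < ∞`) and ν-a.e. for `φ ∈ L^∞`.
(For `T n ≠ 0` one has `lam n ≠ 0` and `(lam n)⁻¹ • T n = P(T n)`; for `T n = 0`,
`lam n = 0` and `(lam n)⁻¹ • T n = 0 = P(0)`.) -/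
def PreConvergent [IsFiniteMeasure ν] (T : ℕ → (Lp ℝ 1 ν →ₗ[ℝ] Lp ℝ 1 ν)) (lam : ℕ → ℝ) : Prop :=
  IsRegular lam ∧
  (∀ (p : ℝ≥0∞), 1 ≤ p → p ≠ ∞ → ∀ φ : Lp ℝ 1 ν, MemLp (⇑φ) p ν →
    ∃ g : X → ℝ, MemLp g p ν ∧
      Tendsto
        (fun N => eLpNorm (fun x => (cesaro ν (fun n => (lam n)⁻¹ • T n) N φ) x - g x) p ν)
        atTop (nhds 0)) ∧
  (∀ φ : Lp ℝ 1 ν, MemLp (⇑φ) ∞ ν →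
    ∀ᵐ x ∂ν, ∃ L : ℝ,
      Tendsto (fun N => (cesaro ν (fun n => (lam n)⁻¹ • T n) N φ) x) atTop (nhds L))

end Paper

section Aux
variable {X : Type*} [MeasurableSpace X] {ν : MeasureTheory.Measure X}

lemma AN.coeFn_sum {ι : Type*} (s : Finset ι) (h : ι → Lp ℝ 1 ν) :
    ⇑(∑ i ∈ s, h i) =ᵐ[ν] fun x => ∑ i ∈ s, h i x := by
  classical
  induction s using Finset.induction_on with
  | empty => simp only [Finset.sum_empty]; exact Lp.coeFn_zero ℝ 1 ν
  | insert i s hni ih =>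
    rw [Finset.sum_insert hni]
    filter_upwards [Lp.coeFn_add (h i) (∑ j ∈ s, h j), ih] with x hx hx2
    simp only [hx, Pi.add_apply, hx2, Finset.sum_insert hni]

lemma AN.eLpNorm_add_le_left {m u : X → ℝ} (hm : AEStronglyMeasurable m ν)
    {p : ℝ≥0∞} (hp : 1 ≤ p) (hpt : p ≠ ∞) :
    eLpNorm (fun x => m x + u x) p ν ≤ eLpNorm m p ν + eLpNorm u p ν := by
  have hp0 : p ≠ 0 := by positivity
  set r := p.toReal with hrdef
  have hr1 : 1 ≤ r := by
    have := ENNReal.toReal_mono hpt hp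
    simpa using this
  have hr0 : r ≠ 0 := by linarith
  have hrpos : (0:ℝ) ≤ r := by linarith
  rw [eLpNorm_eq_lintegral_rpow_enorm_toReal hp0 hpt, eLpNorm_eq_lintegral_rpow_enorm_toReal hp0 hpt,
    eLpNorm_eq_lintegral_rpow_enorm_toReal hp0 hpt]
  obtain ⟨φ₀, hφ₀m, hφ₀le, hφ₀eq⟩ :=
    exists_measurable_le_lintegral_eq ν (fun x => (‖m x + u x‖₊ : ℝ≥0∞) ^ r)
  set ψ : X → ℝ≥0∞ := fun x => φ₀ x ^ (1/r) with hψdef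
  have hψm : Measurable ψ := ENNReal.continuous_rpow_const.measurable.comp hφ₀m
  have hψr : ∀ x, ψ x ^ r = φ₀ x := by
    intro x
    rw [hψdef, ← ENNReal.rpow_mul, one_div, inv_mul_cancel₀ hr0, ENNReal.rpow_one]
  have hψle : ∀ x, ψ x ≤ (‖m x‖₊ : ℝ≥0∞) + (‖u x‖₊ : ℝ≥0∞) := by
    intro x
    calc ψ x ≤ ((‖m x + u x‖₊ : ℝ≥0∞) ^ r) ^ (1/r) :=
          ENNReal.rpow_le_rpow (hφ₀le x) (by positivity)
      _ = (‖m x + u x‖₊ : ℝ≥0∞) := by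
          rw [← ENNReal.rpow_mul, mul_one_div, div_self hr0, ENNReal.rpow_one]
      _ ≤ (‖m x‖₊ : ℝ≥0∞) + (‖u x‖₊ : ℝ≥0∞) := by
          exact_mod_cast nnnorm_add_le (m x) (u x)
  set v : X → ℝ≥0∞ := fun x => ψ x - (‖m x‖₊ : ℝ≥0∞) with hvdef
  have hvm : AEMeasurable v ν := (hψm.aemeasurable).sub hm.enorm
  have hvle : ∀ x, v x ≤ (‖u x‖₊ : ℝ≥0∞) := fun x =>
    tsub_le_iff_right.mpr (by rw [add_comm]; exact hψle x)
  have key1 : (∫⁻ x, (‖m x + u x‖₊ : ℝ≥0∞) ^ r ∂ν)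
      ≤ ∫⁻ x, ((‖m x‖₊ : ℝ≥0∞) + v x) ^ r ∂ν := by
    rw [hφ₀eq]
    refine lintegral_mono fun x => ?_
    calc φ₀ x = ψ x ^ r := (hψr x).symm
      _ ≤ ((‖m x‖₊ : ℝ≥0∞) + v x) ^ r := by
          refine ENNReal.rpow_le_rpow ?_ hrpos
          calc ψ x ≤ v x + (‖m x‖₊ : ℝ≥0∞) := le_tsub_add
            _ = (‖m x‖₊ : ℝ≥0∞) + v x := add_comm _ _
  calc (∫⁻ x, (‖m x + u x‖₊ : ℝ≥0∞) ^ r ∂ν) ^ (1/r)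
      ≤ (∫⁻ x, ((‖m x‖₊ : ℝ≥0∞) + v x) ^ r ∂ν) ^ (1/r) :=
        ENNReal.rpow_le_rpow key1 (by positivity)
    _ ≤ (∫⁻ x, (‖m x‖₊ : ℝ≥0∞) ^ r ∂ν) ^ (1/r) + (∫⁻ x, v x ^ r ∂ν) ^ (1/r) :=
        ENNReal.lintegral_Lp_add_le hm.enorm hvm hr1
    _ ≤ (∫⁻ x, (‖m x‖₊ : ℝ≥0∞) ^ r ∂ν) ^ (1/r) + (∫⁻ x, (‖u x‖₊ : ℝ≥0∞) ^ r ∂ν) ^ (1/r) := by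
        gcongr with x
        exact hvle x

end Aux

open Paper MeasureTheory Filter ENNReal in
lemma AN.lam_nonneg {X : Type*} [MeasurableSpace X] {ν : MeasureTheory.Measure X}
    [IsProbabilityMeasure ν] {A : Lp ℝ 1 ν →ₗ[ℝ] Lp ℝ 1 ν} {lam : ℝ}
    (h : InBPlus ν A lam) : 0 ≤ lam := by
  have hone : ⇑(oneL ν) =ᵐ[ν] fun _ => (1:ℝ) := MemLp.coeFn_toLp _
  have hnorm1 : eLpNorm (⇑(oneL ν)) 1 ν = 1 := by
    rw [eLpNorm_congr_ae hone,
      eLpNorm_const (1:ℝ) one_ne_zero (IsProbabilityMeasure.ne_zero ν)]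
    simp
  have h3 := (h.2.2 1 le_rfl (oneL ν) (Lp.memLp _)).2
  rw [h.1, eLpNorm_congr_ae (Lp.coeFn_smul lam (oneL ν)), eLpNorm_const_smul,
    hnorm1, mul_one, mul_one] at h3
  by_contra hneg
  push_neg at hneg
  rw [ENNReal.ofReal_eq_zero.mpr hneg.le] at h3
  have : lam = 0 := by
    have := le_antisymm h3 (zero_le)
    simpa using this
  exact absurd this hneg.ne

open Paper MeasureTheory Filter ENNReal in
lemma AN.cesaro_diff_bound {X : Type*} [MeasurableSpace X] (ν : MeasureTheory.Measure X)
    [IsProbabilityMeasure ν] (T : ℕ → (Lp ℝ 1 ν →ₗ[ℝ] Lp ℝ 1 ν)) (lam β : ℕ → ℝ)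
    (hT : ∀ n, InBPlus ν (T n) (lam n))
    (p : ℝ≥0∞) (hp : 1 ≤ p) (N : ℕ) (f : Lp ℝ 1 ν) (hf : MemLp (⇑f) p ν) :
    eLpNorm (⇑(cesaro ν (fun n => (lam n)⁻¹ • T n) N f -
        cesaro ν (fun n => (β n)⁻¹ • T n) N f)) p ν ≤
      ENNReal.ofReal ((N : ℝ)⁻¹ * ∑ n ∈ Finset.range N,
        (|(lam n)⁻¹ - (β n)⁻¹| * lam n)) * eLpNorm (⇑f) p ν := by
  have hrepr : cesaro ν (fun n => (lam n)⁻¹ • T n) N f -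
      cesaro ν (fun n => (β n)⁻¹ • T n) N f =
      (N : ℝ)⁻¹ • ∑ n ∈ Finset.range N, ((lam n)⁻¹ - (β n)⁻¹) • (T n f) := by
    simp only [cesaro, LinearMap.smul_apply, LinearMap.sum_apply]
    rw [← smul_sub, ← Finset.sum_sub_distrib]
    congr 1
    exact Finset.sum_congr rfl fun n _ => by rw [sub_smul]
  rw [hrepr, eLpNorm_congr_ae (Lp.coeFn_smul _ _), eLpNorm_const_smul]
  have hsum : eLpNorm (⇑(∑ n ∈ Finset.range N, ((lam n)⁻¹ - (β n)⁻¹) • (T n f))) p ν ≤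
      ∑ n ∈ Finset.range N,
        ENNReal.ofReal (|(lam n)⁻¹ - (β n)⁻¹| * lam n) * eLpNorm (⇑f) p ν := by
    calc eLpNorm (⇑(∑ n ∈ Finset.range N, ((lam n)⁻¹ - (β n)⁻¹) • (T n f))) p ν
        = eLpNorm (∑ n ∈ Finset.range N, ⇑(((lam n)⁻¹ - (β n)⁻¹) • (T n f))) p ν := by
          refine eLpNorm_congr_ae ?_
          refine (AN.coeFn_sum _ _).trans (Eventually.of_forall fun x => ?_)
          simp [Finset.sum_apply]
      _ ≤ ∑ n ∈ Finset.range N, eLpNorm (⇑(((lam n)⁻¹ - (β n)⁻¹) • (T n f))) p ν :=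
          eLpNorm_sum_le (fun n _ => Lp.aestronglyMeasurable _) hp
      _ ≤ ∑ n ∈ Finset.range N,
            ENNReal.ofReal (|(lam n)⁻¹ - (β n)⁻¹| * lam n) * eLpNorm (⇑f) p ν := by
          refine Finset.sum_le_sum fun n _ => ?_
          rw [eLpNorm_congr_ae (Lp.coeFn_smul _ _), eLpNorm_const_smul,
            ENNReal.ofReal_mul (abs_nonneg _), Real.enorm_eq_ofReal_abs, mul_assoc]
          exact mul_le_mul_right ((hT n).2.2 p hp f hf).2 _
  calc (‖(N:ℝ)⁻¹‖₊ : ℝ≥0∞) *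
        eLpNorm (⇑(∑ n ∈ Finset.range N, ((lam n)⁻¹ - (β n)⁻¹) • (T n f))) p ν
      ≤ ENNReal.ofReal (N:ℝ)⁻¹ * ∑ n ∈ Finset.range N,
          ENNReal.ofReal (|(lam n)⁻¹ - (β n)⁻¹| * lam n) * eLpNorm (⇑f) p ν := by
        rw [← enorm_eq_nnnorm, Real.enorm_eq_ofReal_abs, abs_of_nonneg (by positivity : (0:ℝ) ≤ (N:ℝ)⁻¹)]
        exact mul_le_mul_right hsum _
    _ = ENNReal.ofReal ((N : ℝ)⁻¹ * ∑ n ∈ Finset.range N,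
          (|(lam n)⁻¹ - (β n)⁻¹| * lam n)) * eLpNorm (⇑f) p ν := by
        rw [← Finset.sum_mul, ← ENNReal.ofReal_sum_of_nonneg
          (fun n _ => mul_nonneg (abs_nonneg _) (AN.lam_nonneg (hT n))),
          ← mul_assoc, ← ENNReal.ofReal_mul (by positivity)]


set_option maxHeartbeats 2000000 in
open Paper MeasureTheory Filter in
/-- **Claim (approximate normalisation).**
Let `{Tₙ} ⊂ B⁺` with `λ(Tₙ)/(a n^b cⁿ) → 1` (`a > 0`, `b ∈ ℕ`, `c ≥ 1`), and set
`T̂ₙ = Tₙ/(a (n+1)^b cⁿ)`.  Then the difference of the Cesàro averages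
`(1/N)∑_{n<N} P(Tₙ) − (1/N)∑_{n<N} T̂ₙ` tends to `0` in operator norm on every `L^p`,
`p ∈ [1,∞]`; consequently, for `φ ∈ L^p` (`p < ∞`) the two sequences of Cesàro averages
converge in `L^p` simultaneously with the same limit, and for `φ ∈ L^∞` they converge
ν-a.e. simultaneously with the same limit. -/
theorem approximate_normalisation
    {X : Type*} [MeasurableSpace X] (ν : MeasureTheory.Measure X) [IsProbabilityMeasure ν]
    (T : ℕ → (Lp ℝ 1 ν →ₗ[ℝ] Lp ℝ 1 ν)) (lam : ℕ → ℝ)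
    (hT : ∀ n, InBPlus ν (T n) (lam n))
    (a : ℝ) (ha : 0 < a) (b : ℕ) (c : ℝ) (hc : 1 ≤ c)
    (hlim : Tendsto (fun n : ℕ => lam n / (a * (n : ℝ) ^ b * c ^ n)) atTop (nhds 1)) :
    (∀ (p : ℝ≥0∞), 1 ≤ p →
      ∃ C : ℕ → ℝ, Tendsto C atTop (nhds 0) ∧
        ∀ (N : ℕ) (f : Lp ℝ 1 ν), MemLp (⇑f) p ν →
          eLpNorm
            (⇑(cesaro ν (fun n => (lam n)⁻¹ • T n) N f -
               cesaro ν (fun n => (a * ((n : ℝ) + 1) ^ b * c ^ n)⁻¹ • T n) N f)) p ν ≤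
            ENNReal.ofReal (C N) * eLpNorm (⇑f) p ν) ∧
    (∀ (p : ℝ≥0∞), 1 ≤ p → p ≠ ∞ → ∀ φ : Lp ℝ 1 ν, MemLp (⇑φ) p ν →
      ∀ g : X → ℝ,
        (Tendsto
            (fun N => eLpNorm (fun x => (cesaro ν (fun n => (lam n)⁻¹ • T n) N φ) x - g x) p ν)
            atTop (nhds 0) ↔
          Tendsto
            (fun N => eLpNorm
              (fun x => (cesaro ν (fun n => (a * ((n : ℝ) + 1) ^ b * c ^ n)⁻¹ • T n) N φ) x - g x)
              p ν)
            atTop (nhds 0))) ∧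
    (∀ φ : Lp ℝ 1 ν, MemLp (⇑φ) ∞ ν →
      ∀ᵐ x ∂ν, ∀ L : ℝ,
        (Tendsto (fun N => (cesaro ν (fun n => (lam n)⁻¹ • T n) N φ) x) atTop (nhds L) ↔
          Tendsto (fun N => (cesaro ν (fun n => (a * ((n : ℝ) + 1) ^ b * c ^ n)⁻¹ • T n) N φ) x)
            atTop (nhds L))) := by
  classical
  have hc0 : (0:ℝ) < c := lt_of_lt_of_le one_pos hc
  set d : ℕ → ℝ := fun n => |(lam n)⁻¹ - (a * ((n:ℝ)+1)^b * c^n)⁻¹| * lam n with hddef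
  set C : ℕ → ℝ := fun N => (N:ℝ)⁻¹ * ∑ n ∈ Finset.range N, d n with hCdef
  -- the ratio with shifted denominator also tends to 1
  have hfrac : Tendsto (fun n : ℕ => ((n:ℝ)/((n:ℝ)+1))^b) atTop (nhds 1) := by
    simpa using (tendsto_natCast_div_add_atTop (1:ℝ)).pow b
  have hS : Tendsto (fun n : ℕ => lam n / (a * ((n:ℝ)+1)^b * c^n)) atTop (nhds 1) := by
    have hmul := hlim.mul hfrac
    rw [mul_one] at hmul
    refine hmul.congr' ?_
    filter_upwards [eventually_ge_atTop 1] with n hn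
    have hn0 : ((n:ℝ)) ≠ 0 := Nat.cast_ne_zero.mpr (by omega)
    have h2 : ((n:ℝ)+1) ≠ 0 := by positivity
    have h3 : c^n ≠ 0 := (pow_pos hc0 n).ne'
    field_simp
    rw [mul_assoc, ← mul_pow, div_mul_cancel₀ _ h2]
  have hlamne : ∀ᶠ n in atTop, lam n ≠ 0 := by
    filter_upwards [hlim.eventually_ne one_ne_zero] with n hn h0
    exact hn (by simp [h0])
  have hd0 : Tendsto d atTop (nhds 0) := by
    have h1 : Tendsto (fun n : ℕ => |1 - lam n / (a * ((n:ℝ)+1)^b * c^n)|) atTop (nhds 0) := by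
      have h2 := ((tendsto_const_nhds (x := (1:ℝ)) (f := atTop)).sub hS).abs
      simpa using h2
    refine h1.congr' ?_
    filter_upwards [hlamne] with n hn
    have hln : 0 ≤ lam n := AN.lam_nonneg (hT n)
    have he : ((lam n)⁻¹ - (a * ((n:ℝ)+1)^b * c^n)⁻¹) * lam n
        = 1 - lam n / (a * ((n:ℝ)+1)^b * c^n) := by
      rw [sub_mul, inv_mul_cancel₀ hn, div_eq_mul_inv, mul_comm (lam n)]
    simp only [hddef]
    rw [← he, abs_mul, abs_of_nonneg hln]
  have hC : Tendsto C atTop (nhds 0) := by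
    simpa [hCdef] using hd0.cesaro
  have hCnn : ∀ N, 0 ≤ C N := fun N =>
    mul_nonneg (by positivity) (Finset.sum_nonneg fun n _ =>
      mul_nonneg (abs_nonneg _) (AN.lam_nonneg (hT n)))
  have hbd : ∀ (p : ℝ≥0∞), 1 ≤ p → ∀ (N : ℕ) (f : Lp ℝ 1 ν), MemLp (⇑f) p ν →
      eLpNorm (⇑(cesaro ν (fun n => (lam n)⁻¹ • T n) N f -
        cesaro ν (fun n => (a * ((n : ℝ) + 1) ^ b * c ^ n)⁻¹ • T n) N f)) p ν ≤
      ENNReal.ofReal (C N) * eLpNorm (⇑f) p ν := by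
    intro p hp N f hf
    simpa [hCdef, hddef] using
      AN.cesaro_diff_bound ν T lam (fun n => a * ((n:ℝ)+1)^b * c^n) hT p hp N f hf
  refine ⟨fun p hp => ⟨C, hC, fun N f hf => hbd p hp N f hf⟩, ?_, ?_⟩
  · -- L^p simultaneity
    intro p hp hpt φ hφ g
    have hφfin : eLpNorm (⇑φ) p ν ≠ ∞ := hφ.2.ne
    have hCE : Tendsto (fun N => ENNReal.ofReal (C N) * eLpNorm (⇑φ) p ν) atTop (nhds 0) := by
      have h1 : Tendsto (fun N => ENNReal.ofReal (C N)) atTop (nhds 0) := by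
        rw [show (0:ℝ≥0∞) = ENNReal.ofReal 0 by simp]
        exact (ENNReal.continuous_ofReal.tendsto 0).comp hC
      simpa using ENNReal.Tendsto.mul_const h1 (Or.inr hφfin)
    have hw0 : Tendsto (fun N => eLpNorm
        (fun x => (cesaro ν (fun n => (lam n)⁻¹ • T n) N φ) x -
          (cesaro ν (fun n => (a * ((n : ℝ) + 1) ^ b * c ^ n)⁻¹ • T n) N φ) x) p ν)
        atTop (nhds 0) := by
      refine tendsto_of_tendsto_of_tendsto_of_le_of_le tendsto_const_nhds hCE
        (fun N => zero_le) (fun N => ?_)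
      refine le_trans (le_of_eq (eLpNorm_congr_ae ?_)) (hbd p hp N φ hφ)
      filter_upwards [Lp.coeFn_sub ((cesaro ν (fun n => (lam n)⁻¹ • T n) N) φ)
        ((cesaro ν (fun n => (a * ((n : ℝ) + 1) ^ b * c ^ n)⁻¹ • T n) N) φ)] with x hx
      rw [hx, Pi.sub_apply]
    have key : ∀ u v : ℕ → X → ℝ,
        (∀ N, AEStronglyMeasurable (fun x => v N x - u N x) ν) →
        Tendsto (fun N => eLpNorm (fun x => u N x - v N x) p ν) atTop (nhds 0) →
        Tendsto (fun N => eLpNorm (fun x => u N x - g x) p ν) atTop (nhds 0) →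
        Tendsto (fun N => eLpNorm (fun x => v N x - g x) p ν) atTop (nhds 0) := by
      intro u v hmeas hw hu
      have hle : ∀ N, eLpNorm (fun x => v N x - g x) p ν ≤
          eLpNorm (fun x => v N x - u N x) p ν + eLpNorm (fun x => u N x - g x) p ν := by
        intro N
        have h2 := AN.eLpNorm_add_le_left (m := fun x => v N x - u N x)
          (u := fun x => u N x - g x) (hmeas N) hp hpt
        refine le_trans (le_of_eq (eLpNorm_congr_ae (Eventually.of_forall fun x => ?_))) h2
        ring
      have hw' : Tendsto (fun N => eLpNorm (fun x => v N x - u N x) p ν) atTop (nhds 0) := by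
        refine hw.congr fun N => ?_
        rw [show (fun x => u N x - v N x) = -(fun x => v N x - u N x) from
          funext fun x => by simp, eLpNorm_neg]
      have hsum := hw'.add hu
      rw [add_zero] at hsum
      exact tendsto_of_tendsto_of_tendsto_of_le_of_le tendsto_const_nhds hsum
        (fun N => zero_le) hle
    constructor
    · intro h
      refine key _ _ (fun N => ?_) hw0 h
      exact (Lp.aestronglyMeasurable _).sub (Lp.aestronglyMeasurable _)
    · intro h
      refine key _ _ (fun N => ?_) ?_ h
      · exact (Lp.aestronglyMeasurable _).sub (Lp.aestronglyMeasurable _)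
      · refine hw0.congr fun N => ?_
        rw [show (fun x => (cesaro ν (fun n => (lam n)⁻¹ • T n) N φ) x -
              (cesaro ν (fun n => (a * ((n : ℝ) + 1) ^ b * c ^ n)⁻¹ • T n) N φ) x) =
            -(fun x => (cesaro ν (fun n => (a * ((n : ℝ) + 1) ^ b * c ^ n)⁻¹ • T n) N φ) x -
              (cesaro ν (fun n => (lam n)⁻¹ • T n) N φ) x) from funext fun x => by simp,
          eLpNorm_neg]
  · -- a.e. simultaneity
    intro φ hφ
    have hE : eLpNorm (⇑φ) ∞ ν ≠ ∞ := hφ.2.ne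
    set M : ℝ := (eLpNorm (⇑φ) ∞ ν).toReal with hM
    have hae : ∀ N : ℕ, ∀ᵐ x ∂ν,
        |(cesaro ν (fun n => (lam n)⁻¹ • T n) N φ) x -
          (cesaro ν (fun n => (a * ((n : ℝ) + 1) ^ b * c ^ n)⁻¹ • T n) N φ) x| ≤ C N * M := by
      intro N
      have hb := hbd ∞ le_top N φ hφ
      have h1 := enorm_ae_le_eLpNormEssSup
        (⇑(cesaro ν (fun n => (lam n)⁻¹ • T n) N φ -
           cesaro ν (fun n => (a * ((n : ℝ) + 1) ^ b * c ^ n)⁻¹ • T n) N φ)) ν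
      have h2 := Lp.coeFn_sub (cesaro ν (fun n => (lam n)⁻¹ • T n) N φ)
        (cesaro ν (fun n => (a * ((n : ℝ) + 1) ^ b * c ^ n)⁻¹ • T n) N φ)
      filter_upwards [h1, h2] with x hx1 hx2
      have hle : (‖(cesaro ν (fun n => (lam n)⁻¹ • T n) N φ) x -
          (cesaro ν (fun n => (a * ((n : ℝ) + 1) ^ b * c ^ n)⁻¹ • T n) N φ) x‖₊ : ℝ≥0∞)
          ≤ ENNReal.ofReal (C N * M) := by
        rw [show (cesaro ν (fun n => (lam n)⁻¹ • T n) N φ) x -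
            (cesaro ν (fun n => (a * ((n : ℝ) + 1) ^ b * c ^ n)⁻¹ • T n) N φ) x =
            (⇑(cesaro ν (fun n => (lam n)⁻¹ • T n) N φ -
              cesaro ν (fun n => (a * ((n : ℝ) + 1) ^ b * c ^ n)⁻¹ • T n) N φ)) x from by
          rw [hx2, Pi.sub_apply]]
        calc (‖(⇑(cesaro ν (fun n => (lam n)⁻¹ • T n) N φ -
              cesaro ν (fun n => (a * ((n : ℝ) + 1) ^ b * c ^ n)⁻¹ • T n) N φ)) x‖₊ : ℝ≥0∞)
            ≤ eLpNormEssSup (⇑(cesaro ν (fun n => (lam n)⁻¹ • T n) N φ -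
              cesaro ν (fun n => (a * ((n : ℝ) + 1) ^ b * c ^ n)⁻¹ • T n) N φ)) ν := hx1
          _ = eLpNorm (⇑(cesaro ν (fun n => (lam n)⁻¹ • T n) N φ -
              cesaro ν (fun n => (a * ((n : ℝ) + 1) ^ b * c ^ n)⁻¹ • T n) N φ)) ∞ ν :=
              eLpNorm_exponent_top.symm
          _ ≤ ENNReal.ofReal (C N) * eLpNorm (⇑φ) ∞ ν := hb
          _ = ENNReal.ofReal (C N) * ENNReal.ofReal M := by rw [hM, ENNReal.ofReal_toReal hE]
          _ = ENNReal.ofReal (C N * M) := (ENNReal.ofReal_mul (hCnn N)).symm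
      rw [← enorm_eq_nnnorm, Real.enorm_eq_ofReal_abs] at hle
      exact (ENNReal.ofReal_le_ofReal_iff
        (mul_nonneg (hCnn N) ENNReal.toReal_nonneg)).mp hle
    filter_upwards [ae_all_iff.mpr hae] with x hx
    have hCM : Tendsto (fun N => C N * M) atTop (nhds 0) := by
      simpa using hC.mul_const M
    have hdiff : Tendsto (fun N => (cesaro ν (fun n => (lam n)⁻¹ • T n) N φ) x -
        (cesaro ν (fun n => (a * ((n : ℝ) + 1) ^ b * c ^ n)⁻¹ • T n) N φ) x)
        atTop (nhds 0) := by
      refine tendsto_of_tendsto_of_tendsto_of_le_of_le (g := fun N => -(C N * M))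
        ?_ hCM (fun N => (abs_le.mp (hx N)).1) (fun N => (abs_le.mp (hx N)).2)
      simpa using hCM.neg
    intro L
    constructor
    · intro hA
      have h2 := hA.sub hdiff
      rw [sub_zero] at h2
      exact h2.congr fun N => by ring
    · intro hB
      have h2 := hB.add hdiff
      rw [add_zero] at h2
      exact h2.congr fun N => by ring
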